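/- Let k : ℝ → ℝ be continuous and nonnegative with k(0) > 0, and let z : [0,1] → [0,1] be a continuous solution of the equilibrium equation z(x) = (1 − z(x)) · ∫₀¹ z(y) k(|x−y|) dy for all x ∈ [0,1]. Then either z(x) = 0 for all x ∈ [0,1], or z(x) > 0 for all x ∈ [0,1]. -/
import Mathlib


open Set

/-- The kernel-weighted integral operator `χ[z](x) = ∫₀¹ z(y) k(|x−y|) dy`. -/
noncomputable def chi (k z : ℝ → ℝ) (x : ℝ) : ℝ := ∫ y in (0:ℝ)..1, z y * k |x - y|

lemma pos_integral_aux {f : ℝ → ℝ} (hf : ContinuousOn f (Icc 0 1))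
    (hnn : ∀ y ∈ Icc (0:ℝ) 1, 0 ≤ f y) {y₀ : ℝ} (hy₀ : y₀ ∈ Icc (0:ℝ) 1)
    (hpos : 0 < f y₀) : 0 < ∫ y in (0:ℝ)..1, f y := by
  obtain ⟨hy0, hy1⟩ := hy₀
  have hc : Filter.Tendsto f (nhdsWithin y₀ (Icc 0 1)) (nhds (f y₀)) := hf y₀ ⟨hy0, hy1⟩
  have hev : ∀ᶠ y in nhdsWithin y₀ (Icc 0 1), 0 < f y :=
    hc.eventually (eventually_gt_nhds hpos)
  obtain ⟨ε, hε, hball⟩ := Metric.mem_nhdsWithin_iff.mp hev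
  set a := max 0 (y₀ - ε/2) with ha
  set b := min 1 (y₀ + ε/2) with hb
  have hab : a < b :=
    max_lt (lt_min zero_lt_one (by linarith)) (lt_min (by linarith) (by linarith))
  have h0a : (0:ℝ) ≤ a := le_max_left _ _
  have hb1 : b ≤ 1 := min_le_left _ _
  have hsub : Icc a b ⊆ Icc 0 1 := fun y hy => ⟨h0a.trans hy.1, hy.2.trans hb1⟩
  have hposab : ∀ y ∈ Ioo a b, 0 < f y := by
    intro y hy
    have hya : a ≤ y := hy.1.le
    have hyb : y ≤ b := hy.2.le
    have h1 : y₀ - ε/2 ≤ y := le_trans (le_max_right _ _) hya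
    have h2 : y ≤ y₀ + ε/2 := hyb.trans (min_le_right _ _)
    have hdist : dist y y₀ < ε := by
      rw [Real.dist_eq, abs_lt]; constructor <;> linarith
    exact hball ⟨Metric.mem_ball.mpr hdist, hsub ⟨hya, hyb⟩⟩
  have hint : ∀ c d : ℝ, 0 ≤ c → c ≤ d → d ≤ 1 → IntervalIntegrable f MeasureTheory.volume c d := by
    intro c d hc0 hcd hd1
    exact (hf.mono (fun y hy => ⟨hc0.trans hy.1, hy.2.trans hd1⟩)).intervalIntegrable_of_Icc hcd
  have i1 : IntervalIntegrable f MeasureTheory.volume 0 a := hint 0 a le_rfl h0a (hab.le.trans hb1)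
  have i2 : IntervalIntegrable f MeasureTheory.volume a b := hint a b h0a hab.le hb1
  have i3 : IntervalIntegrable f MeasureTheory.volume b 1 := hint b 1 (h0a.trans hab.le) hb1 le_rfl
  have hsplit : (∫ y in (0:ℝ)..1, f y) =
      (∫ y in (0:ℝ)..a, f y) + (∫ y in a..b, f y) + (∫ y in b..(1:ℝ), f y) := by
    rw [intervalIntegral.integral_add_adjacent_intervals i1 i2,
      intervalIntegral.integral_add_adjacent_intervals (i1.trans i2) i3]
  have n1 : 0 ≤ ∫ y in (0:ℝ)..a, f y :=
    intervalIntegral.integral_nonneg h0a (fun u hu => hnn u ⟨hu.1, hu.2.trans (hab.le.trans hb1)⟩)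
  have n3 : 0 ≤ ∫ y in b..(1:ℝ), f y :=
    intervalIntegral.integral_nonneg hb1 (fun u hu => hnn u ⟨(h0a.trans (hab.le.trans hu.1)), hu.2⟩)
  have n2 : 0 < ∫ y in a..b, f y := intervalIntegral.intervalIntegral_pos_of_pos_on i2 hposab hab
  rw [hsplit]; linarith

/-- For `k` continuous, nonnegative with `k(0) > 0`, every continuous
solution `z : [0,1] → [0,1]` of the SIS equilibrium equation is either identically
zero on `[0,1]` or strictly positive on all of `[0,1]`. -/
theorem solution_zero_or_pos (k z : ℝ → ℝ)
    (hk_cont : Continuous k) (hk_nonneg : ∀ r, 0 ≤ k r) (hk0 : 0 < k 0)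
    (hz_cont : ContinuousOn z (Icc 0 1))
    (hz_mem : ∀ x ∈ Icc (0:ℝ) 1, z x ∈ Icc (0:ℝ) 1)
    (hz_eq : ∀ x ∈ Icc (0:ℝ) 1, z x = (1 - z x) * chi k z x) :
    (∀ x ∈ Icc (0:ℝ) 1, z x = 0) ∨ (∀ x ∈ Icc (0:ℝ) 1, 0 < z x) := by
  -- k is positive in a neighborhood of 0
  obtain ⟨δ, hδ, hkpos⟩ : ∃ δ > 0, ∀ r : ℝ, |r| < δ → 0 < k r := by
    have hev : ∀ᶠ r in nhds (0:ℝ), 0 < k r :=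
      (hk_cont.tendsto 0).eventually (eventually_gt_nhds hk0)
    rw [Metric.eventually_nhds_iff] at hev
    obtain ⟨δ, hδ, h⟩ := hev
    exact ⟨δ, hδ, fun r hr => h (by simpa [Real.dist_eq] using hr)⟩
  -- key local vanishing lemma
  have key : ∀ x ∈ Icc (0:ℝ) 1, z x = 0 → ∀ y ∈ Icc (0:ℝ) 1, |y - x| < δ → z y = 0 := by
    intro x hx hzx y hy hyx
    have hchi : chi k z x = 0 := by
      have := hz_eq x hx
      rw [hzx] at this
      linarith [this]
    set f : ℝ → ℝ := fun y => z y * k |x - y| with hf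
    have hfc : ContinuousOn f (Icc 0 1) :=
      hz_cont.mul ((hk_cont.comp (continuous_abs.comp
        (continuous_const.sub continuous_id))).continuousOn)
    have hfnn : ∀ u ∈ Icc (0:ℝ) 1, 0 ≤ f u := fun u hu =>
      mul_nonneg (hz_mem u hu).1 (hk_nonneg _)
    have hzero : ∀ u ∈ Icc (0:ℝ) 1, f u = 0 := by
      intro u hu
      by_contra hne
      have hpos : 0 < f u := lt_of_le_of_ne (hfnn u hu) (Ne.symm hne)
      have := pos_integral_aux hfc hfnn hu hpos
      rw [show (∫ y in (0:ℝ)..1, f y) = chi k z x from rfl, hchi] at this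
      exact lt_irrefl 0 this
    have hfy : f y = 0 := hzero y hy
    have hky : 0 < k |x - y| := by
      apply hkpos
      rw [abs_abs]
      rw [abs_sub_comm] at hyx
      exact hyx
    have := mul_eq_zero.mp hfy
    rcases this with h | h
    · exact h
    · exact absurd h hky.ne'
  -- clopen argument on the connected space Icc 0 1
  haveI : ConnectedSpace (Icc (0:ℝ) 1) :=
    Subtype.connectedSpace ⟨⟨0, le_rfl, zero_le_one⟩, isPreconnected_Icc⟩
  set g : Icc (0:ℝ) 1 → ℝ := fun t => z t with hg
  have hgc : Continuous g := hz_cont.restrict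
  set T : Set (Icc (0:ℝ) 1) := g ⁻¹' {0} with hT
  have hclosed : IsClosed T := isClosed_singleton.preimage hgc
  have hopen : IsOpen T := by
    rw [isOpen_iff_mem_nhds]
    rintro ⟨x, hx⟩ hxT
    have hzx : z x = 0 := hxT
    have hsub : (Subtype.val : Icc (0:ℝ) 1 → ℝ) ⁻¹' Metric.ball x δ ⊆ T := by
      rintro ⟨y, hy⟩ hyb
      have : |y - x| < δ := by simpa [Real.dist_eq] using hyb
      exact key x hx hzx y hy this
    exact Filter.mem_of_superset
      ((Metric.isOpen_ball.preimage continuous_subtype_val).mem_nhds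
        (by simpa [Real.dist_eq] using hδ)) hsub
  rcases isClopen_iff.mp ⟨hclosed, hopen⟩ with h | h
  · right
    intro x hx
    have hne : z x ≠ 0 := by
      intro h0
      have : (⟨x, hx⟩ : Icc (0:ℝ) 1) ∈ T := h0
      rw [h] at this
      exact this
    exact lt_of_le_of_ne (hz_mem x hx).1 (Ne.symm hne)
  · left
    intro x hx
    have : (⟨x, hx⟩ : Icc (0:ℝ) 1) ∈ T := h ▸ mem_univ _
    exact this
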